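/- Let d, ℓ, k be positive integers with k ≤ ℓ and 2ℓ > d. Let p : ℝ^d → ℝ be a Schwartz function. Then all the integrals below converge absolutely, and for every x ∈ ℝ^d and every 1 ≤ i ≤ d: Σ_{j=1}^d ∫_{ℝ^d} K^{div}_{ij}(x−t) ∂_j p(t) dt = 0, and consequently Σ_{j=1}^d ∫_{ℝ^d} K^{curl}_{ij}(x−t) ∂_j p(t) dt = ∫_{ℝ^d} ψ̃_{ℓ,k}(x−t) ∂_i p(t) dt, where ψ̃_{ℓ,k} := q_{d,ℓ,k}(Δ̃) Δ φ_{ℓ+1}. -/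

import Mathlib

open MeasureTheory Finset
open scoped BigOperators RealInnerProductSpace SchwartzMap ENNReal

noncomputable section

/-- Euclidean space `ℝ^d`. -/
abbrev Euc (d : ℕ) := EuclideanSpace ℝ (Fin d)

/-- The constant `E_{m,d}`. -/
def Econst (d m : ℕ) : ℝ :=
  Real.Gamma ((d : ℝ) / 2) /
    (2 ^ m * Real.pi ^ ((d : ℝ) / 2) * (Nat.factorial (m - 1)) *
      ∏ j ∈ (Finset.range m).filter (fun j : ℕ => (2 * (m : ℤ) - 2 * j - d) ≠ 0),
        ((2 * m : ℝ) - 2 * j - d))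

open Classical in
/-- The fundamental solution `φ_m` of the iterated Laplacian `Δ^m`:
`φ_m(x) = ‖x‖^(2m−d) (C_{m,d} ln ‖x‖ + D_{m,d})` with `(C,D) = (0,E)` for odd `d`
and `(E,0)` for even `d`. -/
def phi (d m : ℕ) (x : Euc d) : ℝ :=
  if x = 0 then 0
  else ‖x‖ ^ (2 * m - d) *
    ((if Even d then Econst d m else 0) * Real.log ‖x‖ +
     (if Even d then 0 else Econst d m))

/-- Standard basis vector `e_s`. -/
def evec (d : ℕ) (s : Fin d) : Euc d := EuclideanSpace.single s 1

/-- Central difference operator `Δ̃_s` in direction `s`. -/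
def cdiff (d : ℕ) (s : Fin d) (f : Euc d → ℝ) : Euc d → ℝ :=
  fun x => f (x - evec d s) - 2 * f x + f (x + evec d s)

/-- Iterated central difference operator `∏_s Δ̃_s^{β s}`. -/
def cdiffMulti (d : ℕ) (β : Fin d →₀ ℕ) (f : Euc d → ℝ) : Euc d → ℝ :=
  ((List.ofFn fun s : Fin d => (cdiff d s)^[β s]).foldr (· ∘ ·) id) f

/-- The difference operator `q(Δ̃)` associated with a polynomial `q`. -/
def applyCDiff (d : ℕ) (q : MvPolynomial (Fin d) ℝ) (f : Euc d → ℝ) : Euc d → ℝ :=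
  fun x => ∑ β ∈ q.support, q.coeff β * cdiffMulti d β f x

/-- The coefficients `a_i = (−1)^i 2 (i!)² / (2i+2)!`. -/
def acoef (i : ℕ) : ℝ :=
  (-1 : ℝ) ^ i * 2 * (Nat.factorial i) ^ 2 / Nat.factorial (2 * i + 2)

/-- The polynomial `p_{d,ℓ,k} = (Σ_{i<k} a_i Σ_s x_s^{i+1})^ℓ`. -/
def pPoly (d l k : ℕ) : MvPolynomial (Fin d) ℝ :=
  (∑ i ∈ Finset.range k,
    MvPolynomial.C (acoef i) * ∑ s : Fin d, MvPolynomial.X s ^ (i + 1)) ^ l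

/-- `q_{d,ℓ,k}`: the truncation of `p_{d,ℓ,k}` obtained by deleting every monomial
of total degree `≥ ℓ + k`. -/
def qPoly (d l k : ℕ) : MvPolynomial (Fin d) ℝ :=
  ∑ β ∈ (pPoly d l k).support.filter (fun β => (β.sum fun _ n => n) < l + k),
    MvPolynomial.monomial β ((pPoly d l k).coeff β)

/-- The polyharmonic spline `ψ_{ℓ,k} = q_{d,ℓ,k}(Δ̃) φ_ℓ`. -/
def psi (d l k : ℕ) : Euc d → ℝ := applyCDiff d (qPoly d l k) (phi d l)

/-- Partial derivative `∂_s`. -/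
def pderiv' (d : ℕ) (s : Fin d) (f : Euc d → ℝ) : Euc d → ℝ :=
  fun x => fderiv ℝ f x (evec d s)

/-- Iterated partial derivative `D^α` of multi-index order `α`. -/
def pderivMulti (d : ℕ) (α : Fin d →₀ ℕ) (f : Euc d → ℝ) : Euc d → ℝ :=
  ((List.ofFn fun s : Fin d => (pderiv' d s)^[α s]).foldr (· ∘ ·) id) f

/-- The Laplacian `Δ f = Σ_s ∂²f/∂x_s²`. -/
def lap (d : ℕ) (f : Euc d → ℝ) : Euc d → ℝ :=
  fun x => ∑ s : Fin d, pderiv' d s (pderiv' d s f) x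

/-- Total order `|α|` of a multi-index. -/
def mdeg {d : ℕ} (α : Fin d →₀ ℕ) : ℕ := α.sum fun _ n => n

/-- The Fourier transform with normalization `(2π)^{−d/2} ∫ f(x) e^{−i⟨ω,x⟩} dx`. -/
def ftransform (d : ℕ) (f : Euc d → ℂ) (ω : Euc d) : ℂ :=
  ((2 * Real.pi : ℝ) ^ (-(d : ℝ) / 2) : ℝ) *
    ∫ x : Euc d, f x * Complex.exp (-Complex.I * (⟪ω, x⟫ : ℝ))

/-- `g` is the Fourier–Plancherel transform of `f ∈ L²(ℝ^d)`, characterized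
distributionally: `∫ f û = ∫ g u` for every Schwartz function `u`. -/
def HasFT (d : ℕ) (f g : Euc d → ℂ) : Prop :=
  ∀ u : 𝓢(Euc d, ℂ), ∫ x : Euc d, f x * ftransform d (⇑u) x = ∫ x : Euc d, g x * u x

/-- Componentwise Fourier–Plancherel transform of a vector field. -/
def HasFTvec (d : ℕ) (f : Euc d → Euc d) (g : Euc d → Fin d → ℂ) : Prop :=
  ∀ i : Fin d, HasFT d (fun x => ((f x i : ℝ) : ℂ)) (fun ω => g ω i)

/-- Embedding of an integer multi-index `j ∈ ℤ^d` into `ℝ^d`. -/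
def zpt (d : ℕ) (j : Fin d → ℤ) : Euc d := WithLp.toLp 2 (fun s => (j s : ℝ))

/-- A vector field `f ∈ L²(ℝ^d; ℝ^d)` is weakly divergence-free:
`∫ ⟨f(x), ∇u(x)⟩ dx = 0` for every Schwartz function `u`. -/
def WeaklyDivFree (d : ℕ) (f : Euc d → Euc d) : Prop :=
  ∀ u : 𝓢(Euc d, ℝ), ∫ x : Euc d, ∑ i : Fin d, f x i * pderiv' d i (⇑u) x = 0

/-- A vector field `f ∈ L²(ℝ^d; ℝ^d)` is weakly curl-free:
`∫ (f_i ∂_j u − f_j ∂_i u) dx = 0` for all `i, j` and every Schwartz function `u`. -/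
def WeaklyCurlFree (d : ℕ) (f : Euc d → Euc d) : Prop :=
  ∀ u : 𝓢(Euc d, ℝ), ∀ i j : Fin d,
    ∫ x : Euc d, (f x i * pderiv' d j (⇑u) x - f x j * pderiv' d i (⇑u) x) = 0

/-- Entries of the divergence-free matrix kernel
`K^div_{ij} = q_{d,ℓ,k}(Δ̃)(δ_{ij} Δ − ∂_i ∂_j) φ_{ℓ+1}`. -/
def Kdiv (d l k : ℕ) (i j : Fin d) : Euc d → ℝ :=
  applyCDiff d (qPoly d l k)
    (fun x => (if i = j then lap d (phi d (l + 1)) x else 0)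
      - pderiv' d i (pderiv' d j (phi d (l + 1))) x)

/-- Entries of the curl-free matrix kernel `K^curl_{ij} = q_{d,ℓ,k}(Δ̃)(∂_i ∂_j) φ_{ℓ+1}`. -/
def Kcurl (d l k : ℕ) (i j : Fin d) : Euc d → ℝ :=
  applyCDiff d (qPoly d l k) (pderiv' d i (pderiv' d j (phi d (l + 1))))

/-- `ψ̃_{ℓ,k} := q_{d,ℓ,k}(Δ̃) Δ φ_{ℓ+1}`. -/
def psiTilde (d l k : ℕ) : Euc d → ℝ :=
  applyCDiff d (qPoly d l k) (lap d (phi d (l + 1)))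

end

noncomputable section
namespace S13
variable {d : ℕ}

def Phi (a b : ℝ) (m : ℕ) (x : Euc d) : ℝ := ‖x‖ ^ m * (a * Real.log ‖x‖ + b)

lemma Phi_zero (a b : ℝ) {m : ℕ} (hm : 1 ≤ m) : Phi a b m (0 : Euc d) = 0 := by
  simp [Phi, zero_pow (by omega : m ≠ 0)]

lemma Phi_succ (a b : ℝ) (m : ℕ) (x : Euc d) :
    Phi a b (m + 1) x = ‖x‖ * Phi a b m x := by
  simp [Phi, pow_succ]; ring

lemma Phi_pred (a b : ℝ) {m : ℕ} (hm : 1 ≤ m) (x : Euc d) :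
    Phi a b m x = ‖x‖ * Phi a b (m - 1) x := by
  have hms : m - 1 + 1 = m := by omega
  conv_lhs => rw [← hms, Phi_succ]

lemma sqrt_mul_abs_log_le {r : ℝ} (h0 : 0 < r) (h1 : r ≤ 1) :
    Real.sqrt r * |Real.log r| ≤ 2 := by
  have hs : 0 < Real.sqrt r := Real.sqrt_pos.2 h0
  have h2 : |Real.log r| = -Real.log r := by
    rw [abs_of_nonpos (Real.log_nonpos h0.le h1)]
  have h3 : -Real.log r = 2 * Real.log (Real.sqrt r)⁻¹ := by
    rw [Real.log_inv, Real.log_sqrt h0.le]; ring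
  have h4 : Real.log (Real.sqrt r)⁻¹ ≤ (Real.sqrt r)⁻¹ - 1 :=
    Real.log_le_sub_one_of_pos (by positivity)
  have h5 : (Real.sqrt r)⁻¹ - 1 ≤ (Real.sqrt r)⁻¹ := by linarith
  calc Real.sqrt r * |Real.log r| ≤ Real.sqrt r * (2 * (Real.sqrt r)⁻¹) := by
        rw [h2, h3]
        have := h4.trans h5
        nlinarith [hs.le]
    _ = 2 := by field_simp

lemma Phi_small {a b : ℝ} {m : ℕ} (hm : 1 ≤ m) {x : Euc d} (hx : ‖x‖ ≤ 1) :
    |Phi a b m x| ≤ (2 * |a| + |b|) * Real.sqrt ‖x‖ := by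
  rcases eq_or_lt_of_le (norm_nonneg x) with h0 | h0
  · rw [show Phi a b m x = 0 by simp [Phi, zero_pow (by omega : m ≠ 0), ← h0]]
    simp only [abs_zero]
    positivity
  · set r := ‖x‖ with hr
    have hsq : Real.sqrt r ≤ 1 := Real.sqrt_le_one.mpr hx
    have hrm : r ^ m ≤ r := by
      calc r ^ m ≤ r ^ 1 := pow_le_pow_of_le_one h0.le hx hm
        _ = r := pow_one r
    have hsplit : |Phi a b m x| ≤ |a| * (r ^ m * |Real.log r|) + |b| * r ^ m := by
      rw [Phi]
      calc |r ^ m * (a * Real.log r + b)| = r ^ m * |a * Real.log r + b| := by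
            rw [abs_mul, abs_of_nonneg (by positivity)]
        _ ≤ r ^ m * (|a| * |Real.log r| + |b|) := by
            apply mul_le_mul_of_nonneg_left _ (by positivity)
            exact (abs_add_le _ _).trans (by rw [abs_mul])
        _ = |a| * (r ^ m * |Real.log r|) + |b| * r ^ m := by ring
    have hrs : r ≤ Real.sqrt r := by
      nlinarith [Real.sq_sqrt h0.le, Real.sqrt_nonneg r, Real.sqrt_le_one.mpr hx,
        Real.sqrt_pos.2 h0]
    have hlog : r ^ m * |Real.log r| ≤ 2 * Real.sqrt r := by
      have h1 : r ^ m * |Real.log r| ≤ r * |Real.log r| := by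
        apply mul_le_mul_of_nonneg_right hrm (abs_nonneg _)
      have h2 : r * |Real.log r| = Real.sqrt r * (Real.sqrt r * |Real.log r|) := by
        rw [← mul_assoc, Real.mul_self_sqrt h0.le]
      calc r ^ m * |Real.log r| ≤ Real.sqrt r * (Real.sqrt r * |Real.log r|) := by
            rw [← h2]; exact h1
        _ ≤ Real.sqrt r * 2 := by
            apply mul_le_mul_of_nonneg_left (sqrt_mul_abs_log_le h0 hx) (Real.sqrt_nonneg _)
        _ = 2 * Real.sqrt r := by ring
    calc |Phi a b m x| ≤ |a| * (2 * Real.sqrt r) + |b| * Real.sqrt r := by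
          refine hsplit.trans (add_le_add (mul_le_mul_of_nonneg_left hlog (abs_nonneg a)) ?_)
          exact mul_le_mul_of_nonneg_left (hrm.trans hrs) (abs_nonneg b)
      _ = (2 * |a| + |b|) * Real.sqrt r := by ring

lemma Phi_bound {a b : ℝ} {m : ℕ} (hm : 1 ≤ m) (x : Euc d) :
    |Phi a b m x| ≤ (2 * |a| + |b|) * (1 + ‖x‖) ^ (m + 1) := by
  set r := ‖x‖ with hr
  have hr0 : 0 ≤ r := norm_nonneg x
  have h1r : (1:ℝ) ≤ (1 + r) ^ (m+1) := one_le_pow₀ (by linarith)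
  rcases le_or_gt r 1 with h | h
  · have := Phi_small (a := a) (b := b) hm (x := x) h
    have hs : Real.sqrt r ≤ 1 := Real.sqrt_le_one.mpr h
    calc |Phi a b m x| ≤ (2*|a|+|b|) * Real.sqrt r := this
      _ ≤ (2*|a|+|b|) * 1 := by
          apply mul_le_mul_of_nonneg_left hs (by positivity)
      _ ≤ (2*|a|+|b|) * (1+r)^(m+1) := by
          apply mul_le_mul_of_nonneg_left h1r (by positivity)
  · have hlog : |Real.log r| ≤ r := by
      rw [abs_of_nonneg (Real.log_nonneg h.le)]
      linarith [Real.log_le_sub_one_of_pos (by linarith : (0:ℝ) < r)]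
    have hpm : r ^ m ≤ (1+r)^m := pow_le_pow_left₀ hr0 (by linarith) m
    have : |Phi a b m x| ≤ r ^ m * (|a| * r + |b|) := by
      rw [Phi]
      calc |r ^ m * (a * Real.log r + b)| = r ^ m * |a * Real.log r + b| := by
            rw [abs_mul, abs_of_nonneg (by positivity)]
        _ ≤ r ^ m * (|a| * r + |b|) := by
            apply mul_le_mul_of_nonneg_left _ (by positivity)
            refine (abs_add_le _ _).trans ?_
            rw [abs_mul]
            exact add_le_add (mul_le_mul_of_nonneg_left hlog (abs_nonneg a)) le_rfl
    calc |Phi a b m x| ≤ r ^ m * (|a| * r + |b|) := this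
      _ ≤ (1+r) ^ m * ((2*|a|+|b|) * (1+r)) := by
          apply mul_le_mul hpm _ (by positivity) (by positivity)
          nlinarith [abs_nonneg a, abs_nonneg b]
      _ = (2*|a|+|b|) * (1+r)^(m+1) := by ring

lemma Phi_hasFDerivAt_ne (a b : ℝ) {m : ℕ} (hm : 1 ≤ m) {x : Euc d} (hx : x ≠ 0) :
    HasFDerivAt (Phi a b m)
      ((‖x‖⁻¹ * Phi (m * a) (m * b + a) (m - 1) x) • innerSL ℝ x) x := by
  set r := ‖x‖ with hrdef
  have hr : 0 < r := norm_pos_iff.mpr hx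
  set t₀ : ℝ := r ^ 2 with ht₀
  have ht : 0 < t₀ := by positivity
  -- 1D derivative
  have h1 : HasDerivAt (fun t : ℝ => t ^ ((m:ℝ)/2)) (((m:ℝ)/2) * t₀ ^ ((m:ℝ)/2 - 1)) t₀ :=
    Real.hasDerivAt_rpow_const (Or.inl ht.ne')
  have h2 : HasDerivAt (fun t : ℝ => (a/2) * Real.log t + b) ((a/2) * t₀⁻¹) t₀ := by
    simpa using ((Real.hasDerivAt_log ht.ne').const_mul (a/2)).add_const b
  have hG := h1.mul h2
  have hsq : HasFDerivAt (fun y : Euc d => ‖y‖ ^ 2) ((2:ℕ) • innerSL ℝ x) x :=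
    (hasStrictFDerivAt_norm_sq x).hasFDerivAt
  have hcomp := hG.comp_hasFDerivAt x hsq
  -- rpow facts
  have key : ∀ y : Euc d, y ≠ 0 →
      (‖y‖ ^ 2 : ℝ) ^ ((m:ℝ)/2) = ‖y‖ ^ m ∧ Real.log (‖y‖ ^ 2) = 2 * Real.log ‖y‖ := by
    intro y hy
    constructor
    · rw [← Real.rpow_natCast ‖y‖ 2, ← Real.rpow_mul (norm_nonneg y)]
      push_cast
      rw [show (2:ℝ) * ((m:ℝ)/2) = (m:ℝ) by ring, Real.rpow_natCast]
    · rw [Real.log_pow]; push_cast; ring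
  have heq : (fun y : Euc d => Phi a b m y) =ᶠ[nhds x]
      (fun t : ℝ => t ^ ((m:ℝ)/2) * ((a/2) * Real.log t + b)) ∘ (fun y : Euc d => ‖y‖ ^ 2) := by
    filter_upwards [IsOpen.mem_nhds isOpen_ne hx] with y hy
    obtain ⟨e1, e2⟩ := key y hy
    simp only [Function.comp, Phi, e1, e2]
    ring
  refine (hcomp.congr_of_eventuallyEq heq).congr_fderiv ?_
  -- equality of the continuous linear maps
  obtain ⟨e1, e2⟩ := key x hx
  have e3 : (t₀ : ℝ) ^ ((m:ℝ)/2 - 1) = r ^ m / r ^ 2 := by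
    rw [ht₀, ← Real.rpow_natCast r 2, ← Real.rpow_mul (norm_nonneg x)]
    push_cast
    rw [show (2:ℝ) * ((m:ℝ)/2 - 1) = (m:ℝ) - ((2:ℕ):ℝ) by push_cast; ring,
      Real.rpow_sub hr, Real.rpow_natCast, Real.rpow_natCast]
    norm_num
  have e4 : r ^ (m - 1) = r ^ m / r := by
    rw [eq_div_iff hr.ne']
    rw [← pow_succ]
    congr 1
    omega
  ext v
  simp only [ContinuousLinearMap.smul_apply, ContinuousLinearMap.coe_smul', Pi.smul_apply,
    smul_eq_mul, Phi, e4]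
  rw [ht₀] at e3 ⊢
  rw [e3, show ((‖x‖^2:ℝ)) ^ ((m:ℝ)/2) = r ^ m from e1, show Real.log (‖x‖^2) = 2 * Real.log r from e2]
  field_simp
  rw [← hrdef, e4]
  field_simp
  ring

lemma abs_coord_le (x : Euc d) (j : Fin d) : |x j| ≤ ‖x‖ := by
  have h1 : (inner ℝ x (EuclideanSpace.single j (1:ℝ)) : ℝ) = x j := by
    rw [EuclideanSpace.inner_single_right]
    simp
  have h2 := abs_real_inner_le_norm x (EuclideanSpace.single j (1:ℝ))
  rw [h1, EuclideanSpace.norm_single, norm_one, mul_one] at h2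
  exact h2

lemma norm_proj_le (j : Fin d) : ‖(EuclideanSpace.proj j : Euc d →L[ℝ] ℝ)‖ ≤ 1 := by
  refine ContinuousLinearMap.opNorm_le_bound _ zero_le_one (fun x => ?_)
  rw [one_mul]
  simpa using abs_coord_le x j

lemma littleO_aux {f : Euc d → ℝ} {K : ℝ} (hK : 0 ≤ K)
    (hf : ∀ h : Euc d, ‖h‖ ≤ 1 → |f h| ≤ K * (‖h‖ * Real.sqrt ‖h‖)) :
    HasFDerivAt f (0 : Euc d →L[ℝ] ℝ) 0 := by
  have hf0 : f 0 = 0 := by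
    have := hf 0 (by simp)
    simpa using this
  rw [hasFDerivAt_iff_isLittleO_nhds_zero]
  simp only [zero_add, hf0, sub_zero, ContinuousLinearMap.zero_apply]
  rw [Asymptotics.isLittleO_iff]
  intro c hc
  have hKc : (0:ℝ) < (c / (K+1)) := by positivity
  set δ : ℝ := min 1 ((c / (K+1)) ^ 2) with hδ
  have hδ0 : 0 < δ := by positivity
  filter_upwards [Metric.ball_mem_nhds (0 : Euc d) hδ0] with h hmem
  rw [Metric.mem_ball, dist_zero_right] at hmem
  have h1 : ‖h‖ ≤ 1 := le_of_lt (lt_of_lt_of_le hmem (min_le_left _ _))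
  have h2 : Real.sqrt ‖h‖ ≤ c / (K+1) := by
    have : ‖h‖ ≤ (c / (K+1))^2 := le_of_lt (lt_of_lt_of_le hmem (min_le_right _ _))
    calc Real.sqrt ‖h‖ ≤ Real.sqrt ((c/(K+1))^2) := Real.sqrt_le_sqrt this
      _ = c / (K+1) := Real.sqrt_sq hKc.le
  calc ‖f h‖ = |f h| := rfl
    _ ≤ K * (‖h‖ * Real.sqrt ‖h‖) := hf h h1
    _ ≤ K * (‖h‖ * (c / (K+1))) := by
        apply mul_le_mul_of_nonneg_left _ hK
        exact mul_le_mul_of_nonneg_left h2 (norm_nonneg h)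
    _ = (K / (K+1)) * c * ‖h‖ := by ring
    _ ≤ 1 * c * ‖h‖ := by
        apply mul_le_mul_of_nonneg_right _ (norm_nonneg h)
        apply mul_le_mul_of_nonneg_right _ hc.le
        rw [div_le_one (by linarith)]
        linarith
    _ = c * ‖h‖ := by ring

def DPhi (a b : ℝ) (m : ℕ) (x : Euc d) : Euc d →L[ℝ] ℝ :=
  (‖x‖⁻¹ * Phi (m * a) (m * b + a) (m - 1) x) • innerSL ℝ x

lemma Phi_hasFDerivAt (a b : ℝ) {m : ℕ} (hm : 2 ≤ m) (x : Euc d) :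
    HasFDerivAt (Phi a b m) (DPhi a b m x) x := by
  rcases eq_or_ne x 0 with rfl | hx
  · have hD : DPhi a b m (0 : Euc d) = 0 := by
      simp [DPhi]
    rw [hD]
    apply littleO_aux (K := 2*|a|+|b|) (by positivity)
    intro h hh
    rw [Phi_pred a b (by omega) h, abs_mul, abs_of_nonneg (norm_nonneg h)]
    calc ‖h‖ * |Phi a b (m-1) h| ≤ ‖h‖ * ((2*|a|+|b|) * Real.sqrt ‖h‖) := by
          apply mul_le_mul_of_nonneg_left (Phi_small (by omega) hh) (norm_nonneg h)
      _ = (2*|a|+|b|) * (‖h‖ * Real.sqrt ‖h‖) := by ring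
  · exact Phi_hasFDerivAt_ne a b (by omega) hx

def PhiC (a b : ℝ) (m : ℕ) (j : Fin d) (x : Euc d) : ℝ := x j * Phi a b m x

def DPhiC (a b : ℝ) (m : ℕ) (j : Fin d) (x : Euc d) : Euc d →L[ℝ] ℝ :=
  x j • DPhi a b m x + Phi a b m x • (EuclideanSpace.proj j : Euc d →L[ℝ] ℝ)

lemma PhiC_hasFDerivAt (a b : ℝ) {m : ℕ} (hm : 1 ≤ m) (j : Fin d) (x : Euc d) :
    HasFDerivAt (PhiC a b m j) (DPhiC a b m j x) x := by
  rcases eq_or_ne x 0 with rfl | hx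
  · have hD : DPhiC a b m j (0 : Euc d) = 0 := by
      simp [DPhiC, Phi_zero a b hm]
    rw [hD]
    apply littleO_aux (K := 2*|a|+|b|) (by positivity)
    intro h hh
    rw [PhiC, abs_mul]
    calc |h j| * |Phi a b m h| ≤ ‖h‖ * ((2*|a|+|b|) * Real.sqrt ‖h‖) := by
          apply mul_le_mul (abs_coord_le h j) (Phi_small hm hh) (abs_nonneg _) (norm_nonneg h)
      _ = (2*|a|+|b|) * (‖h‖ * Real.sqrt ‖h‖) := by ring
  · have hc : HasFDerivAt (fun x : Euc d => x j)
        (EuclideanSpace.proj j : Euc d →L[ℝ] ℝ) x :=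
      (EuclideanSpace.proj j : Euc d →L[ℝ] ℝ).hasFDerivAt
    exact hc.mul (Phi_hasFDerivAt_ne a b hm hx)

lemma norm_DPhiC_le (a b : ℝ) {m : ℕ} (hm : 1 ≤ m) (j : Fin d) (x : Euc d) :
    ‖DPhiC a b m j x‖ ≤ |Phi (m*a) (m*b+a) m x| + |Phi a b m x| := by
  refine (norm_add_le _ _).trans (add_le_add ?_ ?_)
  · rcases eq_or_ne x 0 with rfl | hx
    · simp
    · rw [norm_smul (x j) (DPhi a b m x), DPhi,
        norm_smul (‖x‖⁻¹ * Phi ((m:ℝ) * a) ((m:ℝ) * b + a) (m - 1) x) (innerSL ℝ x),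
        innerSL_apply_norm]
      have hr : (0:ℝ) < ‖x‖ := norm_pos_iff.mpr hx
      rw [Phi_pred ((m:ℝ)*a) ((m:ℝ)*b+a) hm x]
      calc ‖x j‖ * (‖‖x‖⁻¹ * Phi (m*a) (m*b+a) (m-1) x‖ * ‖x‖)
          ≤ ‖x‖ * (‖‖x‖⁻¹ * Phi (m*a) (m*b+a) (m-1) x‖ * ‖x‖) := by
            apply mul_le_mul_of_nonneg_right _ (by positivity)
            simpa using abs_coord_le x j
        _ = |‖x‖ * Phi (m*a) (m*b+a) (m-1) x| := by
            rw [Real.norm_eq_abs, abs_mul, abs_inv, abs_mul,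
              abs_of_nonneg (norm_nonneg x)]
            field_simp
  · rw [norm_smul (Phi a b m x) (EuclideanSpace.proj j : Euc d →L[ℝ] ℝ)]
    calc ‖Phi a b m x‖ * ‖(EuclideanSpace.proj j : Euc d →L[ℝ] ℝ)‖
        ≤ ‖Phi a b m x‖ * 1 := by
          apply mul_le_mul_of_nonneg_left (norm_proj_le j) (norm_nonneg _)
      _ = |Phi a b m x| := by rw [mul_one]; rfl

lemma norm_DPhiC_bound (a b : ℝ) {m : ℕ} (hm : 1 ≤ m) (j : Fin d) (x : Euc d) :
    ‖DPhiC a b m j x‖ ≤ ((2*|m*a|+|m*b+a|) + (2*|a|+|b|)) * (1+‖x‖)^(m+1) := by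
  refine (norm_DPhiC_le a b hm j x).trans ?_
  rw [add_mul]
  exact add_le_add (Phi_bound hm x) (Phi_bound hm x)

lemma PhiC_bound (a b : ℝ) {m : ℕ} (hm : 1 ≤ m) (j : Fin d) (x : Euc d) :
    |PhiC a b m j x| ≤ (2*|a|+|b|) * (1+‖x‖)^(m+2) := by
  rw [PhiC, abs_mul]
  calc |x j| * |Phi a b m x| ≤ ‖x‖ * ((2*|a|+|b|) * (1+‖x‖)^(m+1)) :=
        mul_le_mul (abs_coord_le x j) (Phi_bound hm x) (abs_nonneg _) (norm_nonneg x)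
    _ ≤ (1+‖x‖) * ((2*|a|+|b|) * (1+‖x‖)^(m+1)) := by
        apply mul_le_mul_of_nonneg_right (by linarith [norm_nonneg x]) (by positivity)
    _ = (2*|a|+|b|) * (1+‖x‖)^(m+2) := by ring

/-! ## Admissible functions -/

lemma one_add_norm_add_le (y t : Euc d) : 1 + ‖y + t‖ ≤ (1 + ‖y‖) * (1 + ‖t‖) := by
  have h := norm_add_le y t
  have h1 := norm_nonneg y
  have h2 := norm_nonneg t
  nlinarith

lemma one_add_norm_sub_le (y t : Euc d) : 1 + ‖y - t‖ ≤ (1 + ‖y‖) * (1 + ‖t‖) := by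
  have h := norm_sub_le y t
  have h1 := norm_nonneg y
  have h2 := norm_nonneg t
  nlinarith

lemma pow_one_add_norm_sub_le (y t : Euc d) (N : ℕ) :
    (1 + ‖y - t‖) ^ N ≤ (1 + ‖y‖) ^ N * (1 + ‖t‖) ^ N := by
  rw [← mul_pow]
  exact pow_le_pow_left₀ (by positivity) (one_add_norm_sub_le y t) N

def Adm (d : ℕ) (g : Euc d → ℝ) : Prop :=
  Measurable g ∧ ∃ C N, 0 ≤ C ∧ ∀ x, |g x| ≤ C * (1 + ‖x‖) ^ N

lemma schwartz_decay_integrable (w : 𝓢(Euc d, ℝ)) (N : ℕ) :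
    Integrable (fun t : Euc d => (1 + ‖t‖) ^ N * ‖w t‖) volume := by
  have hrw : (fun t : Euc d => (1 + ‖t‖) ^ N * ‖w t‖)
      = fun t => ∑ m ∈ Finset.range (N + 1),
          (N.choose m : ℝ) * (‖t‖ ^ (N - m) * ‖w t‖) := by
    funext t
    rw [add_pow, Finset.sum_mul]
    congr 1 with m
    ring
  rw [hrw]
  exact integrable_finset_sum _
    (fun m _ => ((w.integrable_pow_mul volume (N - m)).const_mul _))

lemma Adm.integrable_mul_schwartz {g : Euc d → ℝ} (hg : Adm d g) (w : 𝓢(Euc d, ℝ)) :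
    Integrable (fun t => g t * w t) volume := by
  obtain ⟨hmeas, C, N, hC, hb⟩ := hg
  refine Integrable.mono' (((schwartz_decay_integrable w N).const_mul C))
    ((hmeas.mul w.continuous.measurable).aestronglyMeasurable)
    (Filter.Eventually.of_forall (fun t => ?_))
  rw [norm_mul]
  calc ‖g t‖ * ‖w t‖ ≤ (C * (1 + ‖t‖) ^ N) * ‖w t‖ :=
        mul_le_mul_of_nonneg_right (hb t) (norm_nonneg _)
    _ = C * ((1 + ‖t‖) ^ N * ‖w t‖) := by ring

lemma Adm.integrable_conv {g : Euc d → ℝ} (hg : Adm d g) (w : 𝓢(Euc d, ℝ)) (y : Euc d) :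
    Integrable (fun t => g (y - t) * w t) volume := by
  obtain ⟨hmeas, C, N, hC, hb⟩ := hg
  have hm2 : Measurable (fun t : Euc d => g (y - t)) :=
    hmeas.comp (measurable_id.const_sub y)
  refine Integrable.mono' (((schwartz_decay_integrable w N).const_mul (C * (1 + ‖y‖) ^ N)))
    ((hm2.mul w.continuous.measurable).aestronglyMeasurable)
    (Filter.Eventually.of_forall (fun t => ?_))
  rw [norm_mul]
  calc ‖g (y - t)‖ * ‖w t‖ ≤ (C * (1 + ‖y - t‖) ^ N) * ‖w t‖ :=
        mul_le_mul_of_nonneg_right (hb _) (norm_nonneg _)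
    _ ≤ (C * ((1 + ‖y‖) ^ N * (1 + ‖t‖) ^ N)) * ‖w t‖ := by
        apply mul_le_mul_of_nonneg_right _ (norm_nonneg _)
        exact mul_le_mul_of_nonneg_left (pow_one_add_norm_sub_le y t N) hC
    _ = C * (1 + ‖y‖) ^ N * ((1 + ‖t‖) ^ N * ‖w t‖) := by ring

lemma Adm.zero : Adm d (fun _ => 0) :=
  ⟨measurable_const, 0, 0, le_rfl, fun x => by simp⟩

lemma Adm.add {g₁ g₂ : Euc d → ℝ} (h₁ : Adm d g₁) (h₂ : Adm d g₂) :
    Adm d (fun x => g₁ x + g₂ x) := by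
  obtain ⟨hm₁, C₁, N₁, hC₁, hb₁⟩ := h₁
  obtain ⟨hm₂, C₂, N₂, hC₂, hb₂⟩ := h₂
  refine ⟨hm₁.add hm₂, C₁ + C₂, max N₁ N₂, by linarith, fun x => ?_⟩
  have h1x : (1:ℝ) ≤ 1 + ‖x‖ := by linarith [norm_nonneg x]
  have e₁ : (1 + ‖x‖) ^ N₁ ≤ (1 + ‖x‖) ^ (max N₁ N₂) :=
    pow_le_pow_right₀ h1x (le_max_left _ _)
  have e₂ : (1 + ‖x‖) ^ N₂ ≤ (1 + ‖x‖) ^ (max N₁ N₂) :=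
    pow_le_pow_right₀ h1x (le_max_right _ _)
  calc |g₁ x + g₂ x| ≤ |g₁ x| + |g₂ x| := abs_add_le _ _
    _ ≤ C₁ * (1 + ‖x‖) ^ N₁ + C₂ * (1 + ‖x‖) ^ N₂ := add_le_add (hb₁ x) (hb₂ x)
    _ ≤ C₁ * (1 + ‖x‖) ^ (max N₁ N₂) + C₂ * (1 + ‖x‖) ^ (max N₁ N₂) :=
        add_le_add (mul_le_mul_of_nonneg_left e₁ hC₁) (mul_le_mul_of_nonneg_left e₂ hC₂)
    _ = (C₁ + C₂) * (1 + ‖x‖) ^ (max N₁ N₂) := by ring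

lemma Adm.const_mul {g : Euc d → ℝ} (h : Adm d g) (c : ℝ) :
    Adm d (fun x => c * g x) := by
  obtain ⟨hm, C, N, hC, hb⟩ := h
  refine ⟨hm.const_mul c, |c| * C, N, by positivity, fun x => ?_⟩
  rw [abs_mul, mul_assoc]
  exact mul_le_mul_of_nonneg_left (hb x) (abs_nonneg c)

lemma Adm.neg {g : Euc d → ℝ} (h : Adm d g) : Adm d (fun x => - g x) := by
  simpa using h.const_mul (-1)

lemma Adm.sub {g₁ g₂ : Euc d → ℝ} (h₁ : Adm d g₁) (h₂ : Adm d g₂) :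
    Adm d (fun x => g₁ x - g₂ x) := by
  simpa [sub_eq_add_neg] using h₁.add h₂.neg

lemma Adm.finset_sum {ι : Type*} (S : Finset ι) (F : ι → Euc d → ℝ)
    (h : ∀ i ∈ S, Adm d (F i)) : Adm d (fun x => ∑ i ∈ S, F i x) := by
  classical
  induction S using Finset.induction_on with
  | empty => simpa using Adm.zero
  | insert a s hnotmem ih =>
    simp only [Finset.sum_insert hnotmem]
    exact (h a (Finset.mem_insert_self a s)).add
      (ih (fun i hi => h i (Finset.mem_insert_of_mem hi)))

lemma Adm.translate {g : Euc d → ℝ} (h : Adm d g) (v : Euc d) :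
    Adm d (fun x => g (x + v)) := by
  obtain ⟨hm, C, N, hC, hb⟩ := h
  refine ⟨hm.comp (measurable_id.add_const v), C * (1 + ‖v‖) ^ N, N, by positivity, fun x => ?_⟩
  calc |g (x + v)| ≤ C * (1 + ‖x + v‖) ^ N := hb _
    _ ≤ C * ((1 + ‖x‖) ^ N * (1 + ‖v‖) ^ N) := by
        apply mul_le_mul_of_nonneg_left _ hC
        rw [← mul_pow]
        exact pow_le_pow_left₀ (by positivity) (one_add_norm_add_le x v) N
    _ = C * (1 + ‖v‖) ^ N * (1 + ‖x‖) ^ N := by ring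

/-! ## Finite combinations of translates -/

def IsTransComb (d : ℕ) (O : (Euc d → ℝ) → Euc d → ℝ) : Prop :=
  ∃ (ι : Type) (_ : Fintype ι) (c : ι → ℝ) (v : ι → Euc d),
    ∀ g x, O g x = ∑ i, c i * g (x + v i)

lemma itc_id : IsTransComb d id := by
  refine ⟨Unit, inferInstance, fun _ => 1, fun _ => 0, fun g x => ?_⟩
  simp

lemma itc_cdiff (s : Fin d) : IsTransComb d (cdiff d s) := by
  refine ⟨Fin 3, inferInstance, ![1, -2, 1], ![-evec d s, 0, evec d s], fun g x => ?_⟩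
  rw [Fin.sum_univ_three]
  simp only [Matrix.cons_val_zero, Matrix.cons_val_one, Matrix.head_cons, Matrix.cons_val_two,
    Matrix.tail_cons]
  rw [cdiff]
  rw [← sub_eq_add_neg, add_zero]
  ring

lemma itc_comp {O₁ O₂ : (Euc d → ℝ) → Euc d → ℝ}
    (h₁ : IsTransComb d O₁) (h₂ : IsTransComb d O₂) : IsTransComb d (O₁ ∘ O₂) := by
  obtain ⟨ι₁, inst₁, c₁, v₁, he₁⟩ := h₁
  obtain ⟨ι₂, inst₂, c₂, v₂, he₂⟩ := h₂
  letI := inst₁; letI := inst₂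
  refine ⟨ι₁ × ι₂, inferInstance, fun p => c₁ p.1 * c₂ p.2,
    fun p => v₁ p.1 + v₂ p.2, fun g x => ?_⟩
  rw [Function.comp_apply, he₁, Fintype.sum_prod_type]
  congr 1 with i
  rw [he₂, Finset.mul_sum]
  congr 1 with j
  rw [← add_assoc]
  ring

lemma itc_iterate {O : (Euc d → ℝ) → Euc d → ℝ} (h : IsTransComb d O) (k : ℕ) :
    IsTransComb d (O^[k]) := by
  induction k with
  | zero => simpa using itc_id
  | succ k ih =>
    rw [Function.iterate_succ]
    exact itc_comp ih h

lemma itc_foldr (L : List ((Euc d → ℝ) → Euc d → ℝ)) (h : ∀ O ∈ L, IsTransComb d O) :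
    IsTransComb d (L.foldr (· ∘ ·) id) := by
  induction L with
  | nil => simpa using itc_id
  | cons O L ih =>
    rw [List.foldr_cons]
    exact itc_comp (h O (List.mem_cons_self))
      (ih (fun O' hO' => h O' (List.mem_cons_of_mem O hO')))

lemma itc_cdiffMulti (β : Fin d →₀ ℕ) : IsTransComb d (fun f => cdiffMulti d β f) := by
  have : (fun f => cdiffMulti d β f)
      = (List.ofFn fun s : Fin d => (cdiff d s)^[β s]).foldr (· ∘ ·) id := by
    funext f
    rfl
  rw [this]
  apply itc_foldr
  intro O hO
  rw [List.mem_ofFn] at hO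
  obtain ⟨s, rfl⟩ := hO
  exact itc_iterate (itc_cdiff s) (β s)

lemma IsTransComb.adm {O : (Euc d → ℝ) → Euc d → ℝ} (hO : IsTransComb d O)
    {g : Euc d → ℝ} (hg : Adm d g) : Adm d (O g) := by
  obtain ⟨ι, inst, c, v, he⟩ := hO
  letI := inst
  have : O g = fun x => ∑ i, (fun x => c i * g (x + v i)) x := by
    funext x; rw [he]
  rw [this]
  exact Adm.finset_sum _ _ (fun i _ => (hg.translate (v i)).const_mul (c i))

lemma IsTransComb.conv_comm {O : (Euc d → ℝ) → Euc d → ℝ} (hO : IsTransComb d O)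
    {g : Euc d → ℝ} (hg : Adm d g) (w : 𝓢(Euc d, ℝ)) :
    (fun y => ∫ t : Euc d, O g (y - t) * w t) = O (fun y => ∫ t : Euc d, g (y - t) * w t) := by
  obtain ⟨ι, inst, c, v, he⟩ := hO
  letI := inst
  funext y
  have h1 : (fun t : Euc d => O g (y - t) * w t)
      = fun t => ∑ i, c i * (g ((y + v i) - t) * w t) := by
    funext t
    rw [he, Finset.sum_mul]
    congr 1 with i
    rw [sub_add_eq_add_sub]
    ring
  rw [h1, integral_finset_sum]
  · rw [he]
    congr 1 with i
    rw [integral_const_mul]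
  · intro i _
    exact (hg.integrable_conv w (y + v i)).const_mul (c i)

lemma IsTransComb.sum_comm {O : (Euc d → ℝ) → Euc d → ℝ} (hO : IsTransComb d O)
    {ι' : Type*} (S : Finset ι') (F : ι' → Euc d → ℝ) (x : Euc d) :
    O (fun y => ∑ j ∈ S, F j y) x = ∑ j ∈ S, O (F j) x := by
  obtain ⟨ι, inst, c, v, he⟩ := hO
  letI := inst
  rw [he]
  simp_rw [he, Finset.mul_sum]
  rw [Finset.sum_comm]

lemma IsTransComb.zero_comm {O : (Euc d → ℝ) → Euc d → ℝ} (hO : IsTransComb d O) (x : Euc d) :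
    O (fun _ => 0) x = 0 := by
  obtain ⟨ι, inst, c, v, he⟩ := hO
  letI := inst
  rw [he]
  simp

lemma IsTransComb.add_comm' {O : (Euc d → ℝ) → Euc d → ℝ} (hO : IsTransComb d O)
    (f₁ f₂ : Euc d → ℝ) (x : Euc d) :
    O (fun y => f₁ y + f₂ y) x = O f₁ x + O f₂ x := by
  obtain ⟨ι, inst, c, v, he⟩ := hO
  letI := inst
  rw [he]
  simp_rw [he, mul_add]
  rw [Finset.sum_add_distrib]

/-! ## applyCDiff level lemmas -/

lemma adm_applyCDiff {g : Euc d → ℝ} (hg : Adm d g) (q : MvPolynomial (Fin d) ℝ) :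
    Adm d (applyCDiff d q g) := by
  have : applyCDiff d q g
      = fun x => ∑ β ∈ q.support, (fun x => q.coeff β * cdiffMulti d β g x) x := rfl
  rw [this]
  exact Adm.finset_sum _ _ (fun β _ => ((itc_cdiffMulti β).adm hg).const_mul _)

lemma conv_applyCDiff {g : Euc d → ℝ} (hg : Adm d g) (q : MvPolynomial (Fin d) ℝ)
    (w : 𝓢(Euc d, ℝ)) (x : Euc d) :
    ∫ t : Euc d, applyCDiff d q g (x - t) * w t
      = ∑ β ∈ q.support, q.coeff β *
          ((fun y => ∫ t : Euc d, cdiffMulti d β g (y - t) * w t) x) := by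
  have h1 : (fun t : Euc d => applyCDiff d q g (x - t) * w t)
      = fun t => ∑ β ∈ q.support, q.coeff β * (cdiffMulti d β g (x - t) * w t) := by
    funext t
    rw [applyCDiff, Finset.sum_mul]
    congr 1 with β
    ring
  rw [h1, integral_finset_sum]
  · congr 1 with β
    rw [integral_const_mul]
  · intro β _
    exact (((itc_cdiffMulti β).adm hg).integrable_conv w x).const_mul _

/-! ## Instantiation with the fundamental solution -/

def Ac (d m : ℕ) : ℝ := if Even d then Econst d m else 0
def Bc (d m : ℕ) : ℝ := if Even d then 0 else Econst d m

lemma phi_eq (d m : ℕ) (hm : 1 ≤ 2 * m - d) :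
    phi d m = Phi (Ac d m) (Bc d m) (2 * m - d) := by
  funext x
  rcases eq_or_ne x 0 with rfl | hx
  · have h1 : phi d m (0 : Euc d) = 0 := by simp [phi]
    rw [h1, Phi_zero _ _ hm]
  · simp only [phi, if_neg hx, Phi, Ac, Bc]

def m1 (d l : ℕ) : ℕ := 2 * (l + 1) - d - 2
def a1 (d l : ℕ) : ℝ := ((2 * (l + 1) - d : ℕ) : ℝ) * Ac d (l + 1)
def b1 (d l : ℕ) : ℝ := ((2 * (l + 1) - d : ℕ) : ℝ) * Bc d (l + 1) + Ac d (l + 1)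

variable {l : ℕ}

lemma hm1_ge (h2l : d < 2 * l) : 1 ≤ m1 d l := by unfold m1; omega

lemma inv_norm_mul_Phi (a b : ℝ) {m : ℕ} (hm : 3 ≤ m) (x : Euc d) :
    ‖x‖⁻¹ * Phi a b (m - 1) x = Phi a b (m - 2) x := by
  rcases eq_or_ne x 0 with rfl | hx
  · rw [Phi_zero a b (by omega), Phi_zero a b (by omega)]
    simp
  · have hr : (0:ℝ) < ‖x‖ := norm_pos_iff.mpr hx
    rw [Phi_pred a b (m := m - 1) (by omega) x]
    rw [show m - 1 - 1 = m - 2 by omega]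
    field_simp

lemma innerSL_evec (x : Euc d) (j : Fin d) : innerSL ℝ x (evec d j) = x j := by
  simp [evec, EuclideanSpace.inner_single_right]

lemma pderiv_phi (h2l : d < 2 * l) (j : Fin d) :
    pderiv' d j (phi d (l + 1)) = PhiC (a1 d l) (b1 d l) (m1 d l) j := by
  have hn : 3 ≤ 2 * (l + 1) - d := by omega
  funext x
  rw [pderiv', phi_eq d (l + 1) (by omega),
    (Phi_hasFDerivAt (Ac d (l+1)) (Bc d (l+1)) (m := 2 * (l + 1) - d) (by omega) x).fderiv]
  rw [DPhi]
  simp only [ContinuousLinearMap.smul_apply, smul_eq_mul]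
  rw [innerSL_evec, PhiC]
  rw [show m1 d l = 2 * (l + 1) - d - 2 from rfl]
  rw [← inv_norm_mul_Phi _ _ hn x]
  unfold a1 b1
  ring

lemma pderiv2_phi (h2l : d < 2 * l) (i j : Fin d) :
    pderiv' d i (pderiv' d j (phi d (l + 1)))
      = fun x => DPhiC (a1 d l) (b1 d l) (m1 d l) j x (evec d i) := by
  funext x
  rw [pderiv_phi h2l j, pderiv',
    (PhiC_hasFDerivAt (a1 d l) (b1 d l) (hm1_ge h2l) j x).fderiv]

lemma lap_phi (h2l : d < 2 * l) :
    lap d (phi d (l + 1))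
      = fun x => ∑ s : Fin d, DPhiC (a1 d l) (b1 d l) (m1 d l) s x (evec d s) := by
  funext x
  rw [lap]
  refine Finset.sum_congr rfl (fun s _ => ?_)
  exact congrFun (pderiv2_phi h2l s s) x

lemma norm_evec (j : Fin d) : ‖evec d j‖ = 1 := by
  simp [evec]

lemma adm_pderiv2 (h2l : d < 2 * l) (i j : Fin d) :
    Adm d (pderiv' d i (pderiv' d j (phi d (l + 1)))) := by
  constructor
  · have h1 : pderiv' d i (pderiv' d j (phi d (l + 1)))
        = fun x => fderiv ℝ (PhiC (a1 d l) (b1 d l) (m1 d l) j) x (evec d i) := by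
      rw [pderiv2_phi h2l i j]
      funext x
      rw [(PhiC_hasFDerivAt (a1 d l) (b1 d l) (hm1_ge h2l) j x).fderiv]
    rw [h1]
    exact measurable_fderiv_apply_const ℝ _ _
  · refine ⟨(2*|(m1 d l : ℝ) * a1 d l|+|(m1 d l : ℝ) * b1 d l + a1 d l|) + (2*|a1 d l|+|b1 d l|),
      m1 d l + 1, by positivity, fun x => ?_⟩
    rw [congrFun (pderiv2_phi h2l i j) x]
    calc |DPhiC (a1 d l) (b1 d l) (m1 d l) j x (evec d i)|
        ≤ ‖DPhiC (a1 d l) (b1 d l) (m1 d l) j x‖ * ‖evec d i‖ :=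
          (DPhiC (a1 d l) (b1 d l) (m1 d l) j x).le_opNorm _
      _ = ‖DPhiC (a1 d l) (b1 d l) (m1 d l) j x‖ := by rw [norm_evec, mul_one]
      _ ≤ _ := norm_DPhiC_bound _ _ (hm1_ge h2l) j x

lemma adm_lap (h2l : d < 2 * l) : Adm d (lap d (phi d (l + 1))) := by
  have h1 : lap d (phi d (l + 1))
      = fun x => ∑ s : Fin d, (pderiv' d s (pderiv' d s (phi d (l + 1)))) x := rfl
  rw [h1]
  exact Adm.finset_sum _ _ (fun s _ => adm_pderiv2 h2l s s)

lemma adm_PhiC (h2l : d < 2 * l) (j : Fin d) :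
    Adm d (PhiC (a1 d l) (b1 d l) (m1 d l) j) := by
  constructor
  · apply Measurable.mul
    · exact (continuous_apply j).measurable.comp (PiLp.continuous_ofLp ..).measurable
    · apply Measurable.mul
      · exact (continuous_norm.measurable).pow_const _
      · exact ((Real.measurable_log.comp continuous_norm.measurable).const_mul _).add_const _
  · exact ⟨2*|a1 d l|+|b1 d l|, m1 d l + 2, by positivity,
      fun x => PhiC_bound _ _ (hm1_ge h2l) j x⟩

lemma adm_gij (h2l : d < 2 * l) (i j : Fin d) :
    Adm d (fun x => (if i = j then lap d (phi d (l + 1)) x else 0)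
      - pderiv' d i (pderiv' d j (phi d (l + 1))) x) := by
  apply Adm.sub _ (adm_pderiv2 h2l i j)
  by_cases h : i = j
  · simpa [h] using adm_lap h2l
  · simpa [h] using (Adm.zero (d := d))

/-! ## Integration by parts -/

lemma schwartz_symm (p : 𝓢(Euc d, ℝ)) (t v w : Euc d) :
    fderiv ℝ (fun x => fderiv ℝ (⇑p) x v) t w = fderiv ℝ (fun x => fderiv ℝ (⇑p) x w) t v := by
  have hdf : Differentiable ℝ (fderiv ℝ ⇑p) :=
    (ContDiff.fderiv_right (m := (⊤:ℕ∞)) (p.smooth ⊤) (by exact_mod_cast le_top)).differentiable (by simp)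
  have h1 : ∀ u : Euc d, fderiv ℝ (fun x => fderiv ℝ (⇑p) x u) t
      = (fderiv ℝ (fderiv ℝ ⇑p) t).flip u := by
    intro u
    have h2 := fderiv_clm_apply (c := fderiv ℝ ⇑p) (u := fun _ => u) (x := t)
      (hdf.differentiableAt) (differentiableAt_const u)
    simpa using h2
  rw [h1 v, h1 w, ContinuousLinearMap.flip_apply, ContinuousLinearMap.flip_apply]
  exact second_derivative_symmetric (fun y => p.differentiableAt.hasFDerivAt)
    (hdf t).hasFDerivAt w v

lemma ibp_step (h2l : d < 2 * l) (j : Fin d) (y : Euc d) (w : 𝓢(Euc d, ℝ)) (v : Fin d) :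
    ∫ t : Euc d, DPhiC (a1 d l) (b1 d l) (m1 d l) j (y - t) (evec d v) * w t
      = ∫ t : Euc d, PhiC (a1 d l) (b1 d l) (m1 d l) j (y - t) * fderiv ℝ (⇑w) t (evec d v) := by
  set A := a1 d l
  set B := b1 d l
  set m := m1 d l
  have hm : 1 ≤ m := hm1_ge h2l
  set h : Euc d → ℝ := fun t => PhiC A B m j (y - t) with hh_def
  have hsub : ∀ t : Euc d, HasFDerivAt (fun t : Euc d => y - t)
      (-(ContinuousLinearMap.id ℝ (Euc d))) t := fun t => (hasFDerivAt_id t).const_sub y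
  have hh : ∀ t : Euc d, HasFDerivAt h
      ((DPhiC A B m j (y - t)).comp (-(ContinuousLinearMap.id ℝ (Euc d)))) t :=
    fun t => (PhiC_hasFDerivAt A B hm j (y - t)).comp t (hsub t)
  have hfderiv_h : ∀ t : Euc d, fderiv ℝ h t (evec d v)
      = -(DPhiC A B m j (y - t) (evec d v)) := by
    intro t
    rw [(hh t).fderiv]
    simp
  -- integrability facts
  have hadm_D : Adm d (fun z => DPhiC A B m j z (evec d v)) := by
    have := adm_pderiv2 h2l v j
    rwa [pderiv2_phi h2l v j] at this
  have hadm_P : Adm d (PhiC A B m j) := adm_PhiC h2l j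
  have hint1 : Integrable (fun t : Euc d => fderiv ℝ h t (evec d v) * w t) volume := by
    have : (fun t : Euc d => fderiv ℝ h t (evec d v) * w t)
        = fun t => (-1 : ℝ) * ((fun z => DPhiC A B m j z (evec d v)) (y - t) * w t) := by
      funext t
      rw [hfderiv_h t]
      ring
    rw [this]
    exact (hadm_D.integrable_conv w y).const_mul _
  have hint2 : Integrable (fun t : Euc d => h t * fderiv ℝ (⇑w) t (evec d v)) volume := by
    have hco : (fun t : Euc d => fderiv ℝ (⇑w) t (evec d v))
        = ⇑((LineDeriv.lineDerivOp (evec d v) w : 𝓢(Euc d, ℝ))) := by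
      funext t
      rw [SchwartzMap.lineDerivOp_apply_eq_fderiv]
    have : (fun t : Euc d => h t * fderiv ℝ (⇑w) t (evec d v))
        = fun t => PhiC A B m j (y - t) * ((LineDeriv.lineDerivOp (evec d v) w : 𝓢(Euc d, ℝ))) t := by
      funext t
      rw [← hco]
    rw [this]
    exact hadm_P.integrable_conv ((LineDeriv.lineDerivOp (evec d v) w : 𝓢(Euc d, ℝ))) y
  have hint3 : Integrable (fun t : Euc d => h t * w t) volume :=
    hadm_P.integrable_conv w y
  have hdiff_h : Differentiable ℝ h := fun t => (hh t).differentiableAt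
  have key := integral_mul_fderiv_eq_neg_fderiv_mul_of_integrable
    (f := h) (g := ⇑w) (v := evec d v) (μ := volume) hint1 hint2 hint3 (fun x _ => hdiff_h x) (fun x _ => w.differentiableAt)
  -- key : ∫ h t * fderiv w t e = - ∫ fderiv h t e * w t
  have h4 : ∫ t : Euc d, DPhiC A B m j (y - t) (evec d v) * w t
      = - ∫ t : Euc d, fderiv ℝ h t (evec d v) * w t := by
    rw [← integral_neg]
    congr 1 with t
    rw [hfderiv_h t]
    ring
  rw [h4, ← key]

lemma core (h2l : d < 2 * l) (p : 𝓢(Euc d, ℝ)) (i : Fin d) (y : Euc d) :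
    ∑ j : Fin d, ∫ t : Euc d, ((if i = j then lap d (phi d (l+1)) (y - t) else 0)
      - pderiv' d i (pderiv' d j (phi d (l+1))) (y - t)) * pderiv' d j (⇑p) t = 0 := by
  set A := a1 d l
  set B := b1 d l
  set m := m1 d l
  have hm : 1 ≤ m := hm1_ge h2l
  set w : Fin d → 𝓢(Euc d, ℝ) := fun j => (LineDeriv.lineDerivOp (evec d j) p : 𝓢(Euc d, ℝ)) with hw_def
  have hw : ∀ j, ⇑(w j) = pderiv' d j (⇑p) := by
    intro j
    funext t
    rw [hw_def]
    simp only [SchwartzMap.lineDerivOp_apply_eq_fderiv]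
    rfl
  have hsplit : ∀ j : Fin d,
      ∫ t : Euc d, ((if i = j then lap d (phi d (l+1)) (y - t) else 0)
        - pderiv' d i (pderiv' d j (phi d (l+1))) (y - t)) * pderiv' d j (⇑p) t
      = (∫ t : Euc d, (if i = j then lap d (phi d (l+1)) (y - t) else 0) * (w j) t)
        - ∫ t : Euc d, DPhiC A B m j (y - t) (evec d i) * (w j) t := by
    intro j
    rw [← integral_sub]
    · congr 1 with t
      rw [hw j, congrFun (pderiv2_phi h2l i j) (y - t)]
      ring
    · by_cases hij : i = j
      · simp only [hij, if_pos rfl]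
        exact (adm_lap h2l).integrable_conv (w j) y
      · simp only [if_neg hij]
        simp
    · have hadm_D : Adm d (fun z => DPhiC A B m j z (evec d i)) := by
        have := adm_pderiv2 h2l i j
        rwa [pderiv2_phi h2l i j] at this
      exact hadm_D.integrable_conv (w j) y
  simp only [hsplit]
  rw [Finset.sum_sub_distrib]
  have hfirst : ∑ j : Fin d,
      ∫ t : Euc d, (if i = j then lap d (phi d (l+1)) (y - t) else 0) * (w j) t
      = ∑ s : Fin d, ∫ t : Euc d, DPhiC A B m s (y - t) (evec d s) * (w i) t := by
    rw [Finset.sum_eq_single i]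
    · have h1 : ∫ t : Euc d, lap d (phi d (l+1)) (y - t) * (w i) t
          = ∑ s : Fin d, ∫ t : Euc d, DPhiC A B m s (y - t) (evec d s) * (w i) t := by
        have h2 : (fun t : Euc d => lap d (phi d (l+1)) (y - t) * (w i) t)
            = fun t => ∑ s : Fin d, DPhiC A B m s (y - t) (evec d s) * (w i) t := by
          funext t
          rw [congrFun (lap_phi h2l) (y - t), Finset.sum_mul]
        rw [h2, integral_finset_sum]
        intro s _
        have hadm_D : Adm d (fun z => DPhiC A B m s z (evec d s)) := by
          have := adm_pderiv2 h2l s s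
          rwa [pderiv2_phi h2l s s] at this
        exact hadm_D.integrable_conv (w i) y
      simpa using h1
    · intro j _ hji
      have : i ≠ j := fun h => hji h.symm
      simp [this]
    · intro h
      exact absurd (Finset.mem_univ i) h
  rw [hfirst]
  have hsecond : ∀ j : Fin d,
      ∫ t : Euc d, DPhiC A B m j (y - t) (evec d i) * (w j) t
        = ∫ t : Euc d, PhiC A B m j (y - t) * fderiv ℝ (⇑(w j)) t (evec d i) :=
    fun j => ibp_step h2l j y (w j) i
  have hfirst2 : ∀ s : Fin d,
      ∫ t : Euc d, DPhiC A B m s (y - t) (evec d s) * (w i) t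
        = ∫ t : Euc d, PhiC A B m s (y - t) * fderiv ℝ (⇑(w i)) t (evec d s) :=
    fun s => ibp_step h2l s y (w i) s
  simp only [hsecond, hfirst2]
  rw [← Finset.sum_sub_distrib]
  apply Finset.sum_eq_zero
  intro s _
  rw [sub_eq_zero]
  congr 1 with t
  congr 1
  rw [hw i, hw s]
  exact schwartz_symm p t (evec d s) (evec d i) ▸ rfl

lemma applyCDiff_add (q : MvPolynomial (Fin d) ℝ) (f₁ f₂ : Euc d → ℝ) (x : Euc d) :
    applyCDiff d q (fun z => f₁ z + f₂ z) x = applyCDiff d q f₁ x + applyCDiff d q f₂ x := by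
  unfold applyCDiff
  rw [← Finset.sum_add_distrib]
  congr 1 with β
  rw [show cdiffMulti d β (fun z => f₁ z + f₂ z) x
    = cdiffMulti d β f₁ x + cdiffMulti d β f₂ x from (itc_cdiffMulti β).add_comm' f₁ f₂ x]
  ring

lemma applyCDiff_zero (q : MvPolynomial (Fin d) ℝ) (x : Euc d) :
    applyCDiff d q (fun _ => 0) x = 0 := by
  unfold applyCDiff
  apply Finset.sum_eq_zero
  intro β _
  rw [show cdiffMulti d β (fun _ => (0:ℝ)) x = 0 from (itc_cdiffMulti β).zero_comm x]
  ring

end S13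
end

noncomputable section

/-- For a gradient field `∇p` with `p` Schwartz, convolution with the
divergence-free kernel annihilates `∇p`, and convolution with the curl-free kernel
reduces to convolution with `ψ̃_{ℓ,k} = q_{d,ℓ,k}(Δ̃) Δ φ_{ℓ+1}`. -/
theorem statement13 (d l k : ℕ) (hd : 0 < d) (hk : 0 < k) (hkl : k ≤ l) (h2l : d < 2 * l)
    (p : 𝓢(Euc d, ℝ)) :
    (∀ i j : Fin d, ∀ x : Euc d,
      Integrable (fun t : Euc d => Kdiv d l k i j (x - t) * pderiv' d j (⇑p) t) volume ∧
      Integrable (fun t : Euc d => Kcurl d l k i j (x - t) * pderiv' d j (⇑p) t) volume ∧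
      Integrable (fun t : Euc d => psiTilde d l k (x - t) * pderiv' d i (⇑p) t) volume) ∧
    (∀ x : Euc d, ∀ i : Fin d,
      ∑ j : Fin d, ∫ t : Euc d, Kdiv d l k i j (x - t) * pderiv' d j (⇑p) t = 0) ∧
    (∀ x : Euc d, ∀ i : Fin d,
      ∑ j : Fin d, ∫ t : Euc d, Kcurl d l k i j (x - t) * pderiv' d j (⇑p) t
        = ∫ t : Euc d, psiTilde d l k (x - t) * pderiv' d i (⇑p) t) := by
  classical
  set q : MvPolynomial (Fin d) ℝ := qPoly d l k with hq
  set W : Fin d → 𝓢(Euc d, ℝ) := fun j => (LineDeriv.lineDerivOp (evec d j) p : 𝓢(Euc d, ℝ)) with hW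
  have hw : ∀ j : Fin d, ⇑(W j) = pderiv' d j (⇑p) := by
    intro j
    funext t
    rw [hW]
    simp only [SchwartzMap.lineDerivOp_apply_eq_fderiv]
    rfl
  -- the functions inside the kernels
  set gdiv : Fin d → Fin d → Euc d → ℝ := fun i j =>
    fun z => (if i = j then lap d (phi d (l + 1)) z else 0)
      - pderiv' d i (pderiv' d j (phi d (l + 1))) z with hgdiv
  have hKdiv : ∀ i j : Fin d, Kdiv d l k i j = applyCDiff d q (gdiv i j) := fun i j => rfl
  have hKcurl : ∀ i j : Fin d, Kcurl d l k i j
      = applyCDiff d q (pderiv' d i (pderiv' d j (phi d (l + 1)))) := fun i j => rfl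
  have hpsi : psiTilde d l k = applyCDiff d q (lap d (phi d (l + 1))) := rfl
  have hadm_gdiv : ∀ i j : Fin d, S13.Adm d (gdiv i j) := fun i j => S13.adm_gij h2l i j
  have hadm_Kdiv : ∀ i j : Fin d, S13.Adm d (Kdiv d l k i j) := fun i j =>
    hKdiv i j ▸ S13.adm_applyCDiff (hadm_gdiv i j) q
  have hadm_Kcurl : ∀ i j : Fin d, S13.Adm d (Kcurl d l k i j) := fun i j =>
    hKcurl i j ▸ S13.adm_applyCDiff (S13.adm_pderiv2 h2l i j) q
  have hadm_psi : S13.Adm d (psiTilde d l k) :=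
    hpsi ▸ S13.adm_applyCDiff (S13.adm_lap h2l) q
  -- integrability statements
  have hint_div : ∀ (i j : Fin d) (x : Euc d),
      Integrable (fun t : Euc d => Kdiv d l k i j (x - t) * pderiv' d j (⇑p) t) volume := by
    intro i j x
    have := (hadm_Kdiv i j).integrable_conv (W j) x
    rwa [hw j] at this
  have hint_curl : ∀ (i j : Fin d) (x : Euc d),
      Integrable (fun t : Euc d => Kcurl d l k i j (x - t) * pderiv' d j (⇑p) t) volume := by
    intro i j x
    have := (hadm_Kcurl i j).integrable_conv (W j) x
    rwa [hw j] at this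
  have hint_psi : ∀ (i : Fin d) (x : Euc d),
      Integrable (fun t : Euc d => psiTilde d l k (x - t) * pderiv' d i (⇑p) t) volume := by
    intro i x
    have := hadm_psi.integrable_conv (W i) x
    rwa [hw i] at this
  -- the main vanishing statement
  have hmain : ∀ (x : Euc d) (i : Fin d),
      ∑ j : Fin d, ∫ t : Euc d, Kdiv d l k i j (x - t) * pderiv' d j (⇑p) t = 0 := by
    intro x i
    set T : Fin d → Euc d → ℝ := fun j => fun y => ∫ t : Euc d, gdiv i j (y - t) * (W j) t
      with hT
    have hterm : ∀ j : Fin d,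
        ∫ t : Euc d, Kdiv d l k i j (x - t) * pderiv' d j (⇑p) t
          = ∑ β ∈ q.support, q.coeff β * cdiffMulti d β (T j) x := by
      intro j
      rw [← hw j, hKdiv i j]
      rw [S13.conv_applyCDiff (hadm_gdiv i j) q (W j) x]
      refine Finset.sum_congr rfl (fun β _ => ?_)
      congr 1
      have h1 := (S13.itc_cdiffMulti β).conv_comm (hadm_gdiv i j) (W j)
      exact congrFun h1 x
    have hTzero : (fun y => ∑ j : Fin d, T j y) = (fun _ : Euc d => (0:ℝ)) := by
      funext y
      have hc := S13.core h2l p i y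
      simp only [hT, hgdiv, hw]
      exact hc
    calc ∑ j : Fin d, ∫ t : Euc d, Kdiv d l k i j (x - t) * pderiv' d j (⇑p) t
        = ∑ j : Fin d, ∑ β ∈ q.support, q.coeff β * cdiffMulti d β (T j) x :=
          Finset.sum_congr rfl (fun j _ => hterm j)
      _ = ∑ β ∈ q.support, ∑ j : Fin d, q.coeff β * cdiffMulti d β (T j) x :=
          Finset.sum_comm
      _ = ∑ β ∈ q.support, q.coeff β * ∑ j : Fin d, cdiffMulti d β (T j) x := by
          refine Finset.sum_congr rfl (fun β _ => ?_)
          rw [Finset.mul_sum]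
      _ = 0 := by
          refine Finset.sum_eq_zero (fun β _ => ?_)
          have h2 : ∑ j : Fin d, cdiffMulti d β (T j) x
              = cdiffMulti d β (fun y => ∑ j : Fin d, T j y) x :=
            ((S13.itc_cdiffMulti β).sum_comm Finset.univ T x).symm
          rw [h2, hTzero, (S13.itc_cdiffMulti β).zero_comm x, mul_zero]
  refine ⟨fun i j x => ⟨hint_div i j x, hint_curl i j x, hint_psi i x⟩, hmain, ?_⟩
  intro x i
  -- pointwise kernel identity
  have hker : ∀ (j : Fin d) (z : Euc d),
      Kcurl d l k i j z = (if i = j then psiTilde d l k z else 0) - Kdiv d l k i j z := by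
    intro j z
    have hsum : Kdiv d l k i j z + Kcurl d l k i j z
        = (if i = j then psiTilde d l k z else 0) := by
      rw [hKdiv i j, hKcurl i j, ← S13.applyCDiff_add q _ _ z]
      have h3 : (fun y => gdiv i j y + pderiv' d i (pderiv' d j (phi d (l + 1))) y)
          = fun y => (if i = j then lap d (phi d (l + 1)) y else 0) := by
        funext y
        simp only [hgdiv]
        ring
      rw [h3]
      by_cases hij : i = j
      · simp only [hij, if_pos rfl]
        rfl
      · simp only [if_neg hij]
        exact S13.applyCDiff_zero q z
    linarith [hsum]
  have hint_if : ∀ j : Fin d, Integrable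
      (fun t : Euc d => (if i = j then psiTilde d l k (x - t) else 0) * pderiv' d j (⇑p) t)
      volume := by
    intro j
    by_cases hij : i = j
    · simp only [hij, if_pos rfl]
      subst hij
      exact hint_psi i x
    · simp only [if_neg hij]
      simp
  have hstep : ∀ j : Fin d,
      ∫ t : Euc d, Kcurl d l k i j (x - t) * pderiv' d j (⇑p) t
        = (∫ t : Euc d, (if i = j then psiTilde d l k (x - t) else 0) * pderiv' d j (⇑p) t)
          - ∫ t : Euc d, Kdiv d l k i j (x - t) * pderiv' d j (⇑p) t := by
    intro j
    rw [← integral_sub (hint_if j) (hint_div i j x)]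
    congr 1 with t
    rw [hker j (x - t)]
    ring
  calc ∑ j : Fin d, ∫ t : Euc d, Kcurl d l k i j (x - t) * pderiv' d j (⇑p) t
      = ∑ j : Fin d, ((∫ t : Euc d, (if i = j then psiTilde d l k (x - t) else 0)
            * pderiv' d j (⇑p) t)
          - ∫ t : Euc d, Kdiv d l k i j (x - t) * pderiv' d j (⇑p) t) :=
        Finset.sum_congr rfl (fun j _ => hstep j)
    _ = (∑ j : Fin d, ∫ t : Euc d, (if i = j then psiTilde d l k (x - t) else 0)
            * pderiv' d j (⇑p) t)
        - ∑ j : Fin d, ∫ t : Euc d, Kdiv d l k i j (x - t) * pderiv' d j (⇑p) t :=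
        Finset.sum_sub_distrib _ _
    _ = ∫ t : Euc d, psiTilde d l k (x - t) * pderiv' d i (⇑p) t := by
        rw [hmain x i, sub_zero]
        rw [Finset.sum_eq_single i (fun j _ hji => by
          have hij : ¬ (i = j) := fun h => hji h.symm
          simp [hij]) (fun h => absurd (Finset.mem_univ i) h)]
        simp


end
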